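/- For the Santa Fe count U_n as above, with M_n = ⌈C n^{1/α}⌉ for a constant C > e·ζ(α)^{−1/α}, there exists δ > 0 such that P(U_n ≥ M_n) ≤ (C n^{1/α} + 2)·exp(−δ n^{1/α}) for all sufficiently large n; hence ∑_n P(U_n ≥ M_n) < ∞ and almost surely U_n < M_n eventually. -/

import Mathlib

open MeasureTheory ProbabilityTheory Filter
open scoped ENNReal

/-- The largest `l` such that every `1 ≤ k ≤ l` appears among `K 0, …, K (n-1)`. -/
noncomputable def santaU {Ω : Type*} (K : ℕ → Ω → ℕ) (n : ℕ) (ω : Ω) : ℕ :=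
  sSup {l : ℕ | ∀ m : ℕ, 1 ≤ m → m ≤ l → ∃ i < n, K i ω = m}

lemma santa_mem {Ω : Type*} {K : ℕ → Ω → ℕ} {n : ℕ} {ω : Ω} {M : ℕ}
    (h : M ≤ santaU K n ω) {m : ℕ} (h1 : 1 ≤ m) (hm : m ≤ M) : ∃ i < n, K i ω = m := by
  set S := {l : ℕ | ∀ m : ℕ, 1 ≤ m → m ≤ l → ∃ i < n, K i ω = m} with hS
  by_cases hb : BddAbove S
  · have h0 : (0:ℕ) ∈ S := fun m h1 h2 => absurd (h1.trans h2) (by omega)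
    have hmem := Nat.sSup_mem ⟨0, h0⟩ hb
    exact hmem m h1 (hm.trans h)
  · obtain ⟨l, hl, hMl⟩ := not_bddAbove_iff'.1 hb M
    exact hl m h1 (hm.trans (le_of_not_ge hMl))

lemma santa_indep_prod {Ω : Type*} [MeasurableSpace Ω] {μ : Measure Ω}
    {K : ℕ → Ω → ℕ}
    (hiid : iIndepFun K μ)
    {M : ℕ} (ψ : Fin M → ℕ) (hψ : Function.Injective ψ) (v : Fin M → ℕ) :
    μ (⋂ m, K (ψ m) ⁻¹' {v m}) = ∏ m, μ (K (ψ m) ⁻¹' {v m}) := by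
  classical
  set g : ℕ → ℕ := fun i => if h : ∃ m, ψ m = i then v h.choose else 0 with hg
  have hgψ : ∀ m, g (ψ m) = v m := by
    intro m
    have h : ∃ m', ψ m' = ψ m := ⟨m, rfl⟩
    simp only [hg, dif_pos h]
    exact congrArg v (hψ h.choose_spec)
  have hiter : (⋂ m, K (ψ m) ⁻¹' {v m}) = ⋂ i ∈ Finset.image ψ Finset.univ, K i ⁻¹' {g i} := by
    rw [Finset.set_biInter_finset_image]
    simp [hgψ]
  have hprod : (∏ m, μ (K (ψ m) ⁻¹' {v m})) =
      ∏ i ∈ Finset.image ψ Finset.univ, μ (K i ⁻¹' {g i}) := by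
    rw [Finset.prod_image (fun a _ b _ h => hψ h)]
    simp [hgψ]
  rw [hiter, hprod]
  refine hiid.meas_biInter (fun i _ => ?_)
  exact ⟨{g i}, measurableSet_singleton _, rfl⟩

lemma santa_union_bound {Ω : Type*} [MeasurableSpace Ω] {μ : Measure Ω}
    {K : ℕ → Ω → ℕ}
    (hiid : iIndepFun K μ)
    (p : ℕ → ℝ≥0∞) (hp : ∀ i k, 1 ≤ k → μ (K i ⁻¹' {k}) = p k) (n M : ℕ) :
    μ {ω | ∀ m : ℕ, 1 ≤ m → m ≤ M → ∃ i < n, K i ω = m} ≤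
      (n : ℝ≥0∞) ^ M * ∏ m ∈ Finset.range M, p (m + 1) := by
  classical
  have hsub : {ω | ∀ m : ℕ, 1 ≤ m → m ≤ M → ∃ i < n, K i ω = m} ⊆
      ⋃ φ : Fin M → Fin n, ⋂ m : Fin M, K (φ m) ⁻¹' {(m : ℕ) + 1} := by
    intro ω hω
    have h : ∀ m : Fin M, ∃ i, i < n ∧ K i ω = (m : ℕ) + 1 := by
      intro m
      obtain ⟨i, hi, hKi⟩ := hω ((m : ℕ) + 1) (Nat.succ_le_succ (Nat.zero_le _))
        (Nat.succ_le_of_lt m.2)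
      exact ⟨i, hi, hKi⟩
    choose i hi hKi using h
    exact Set.mem_iUnion.2 ⟨fun m => ⟨i m, hi m⟩, Set.mem_iInter.2 fun m => hKi m⟩
  refine (measure_mono hsub).trans ((measure_iUnion_le _).trans ?_)
  have hterm : ∀ φ : Fin M → Fin n,
      μ (⋂ m : Fin M, K (φ m) ⁻¹' {(m : ℕ) + 1}) ≤ ∏ m ∈ Finset.range M, p (m + 1) := by
    intro φ
    by_cases hinj : Function.Injective (fun m => ((φ m : ℕ)))
    · rw [santa_indep_prod hiid _ hinj]
      rw [← Fin.prod_univ_eq_prod_range (fun m => p (m + 1)) M]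
      exact le_of_eq (Finset.prod_congr rfl fun m _ =>
        hp _ _ (Nat.succ_le_succ (Nat.zero_le _)))
    · have : (⋂ m : Fin M, K (φ m) ⁻¹' {(m : ℕ) + 1}) = ∅ := by
        rw [Set.eq_empty_iff_forall_notMem]
        intro ω hω
        simp only [Function.Injective, not_forall] at hinj
        obtain ⟨a, b, hab, hne⟩ := hinj
        have ha := Set.mem_iInter.1 hω a
        have hb := Set.mem_iInter.1 hω b
        simp only [Set.mem_preimage, Set.mem_singleton_iff, hab] at ha hb
        exact hne (Fin.ext (by omega))
      simp [this]
  calc (∑' φ : Fin M → Fin n, μ (⋂ m : Fin M, K (φ m) ⁻¹' {(m : ℕ) + 1}))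
      ≤ ∑' _φ : Fin M → Fin n, ∏ m ∈ Finset.range M, p (m + 1) :=
        ENNReal.tsum_le_tsum hterm
    _ = (n : ℝ≥0∞) ^ M * ∏ m ∈ Finset.range M, p (m + 1) := by
        rw [tsum_fintype, Finset.sum_const, Finset.card_univ, Fintype.card_fun,
          Fintype.card_fin, Fintype.card_fin, nsmul_eq_mul]
        simp

lemma santa_numeric (α ζ C : ℝ) (hα : 1 < α) (hζ : 1 ≤ ζ)
    (hC : C > Real.exp 1 * ζ ^ (-(1/α))) :
    ∃ δ > (0:ℝ), ∀ n : ℕ, 1 ≤ n →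
      (n:ℝ) ^ (⌈C * (n:ℝ)^(1/α)⌉₊) *
        ((Nat.factorial ⌈C * (n:ℝ)^(1/α)⌉₊ : ℝ) ^ (-α) / ζ ^ (⌈C * (n:ℝ)^(1/α)⌉₊)) ≤
      Real.exp (-δ * (n:ℝ)^(1/α)) := by
  have hζ0 : (0:ℝ) < ζ := lt_of_lt_of_le one_pos hζ
  have hα0 : (0:ℝ) < α := lt_trans one_pos hα
  have hCpos : 0 < C :=
    lt_trans (mul_pos (Real.exp_pos 1) (Real.rpow_pos_of_pos hζ0 _)) hC
  set ε : ℝ := Real.log C + Real.log ζ / α - 1 with hε_def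
  have hε : 0 < ε := by
    have h1 : Real.log (Real.exp 1 * ζ ^ (-(1/α))) < Real.log C :=
      Real.log_lt_log (mul_pos (Real.exp_pos 1) (Real.rpow_pos_of_pos hζ0 _)) hC
    rw [Real.log_mul (Real.exp_ne_zero 1) (ne_of_gt (Real.rpow_pos_of_pos hζ0 _)),
      Real.log_exp, Real.log_rpow hζ0] at h1
    have h2 : -(1/α) * Real.log ζ = -(Real.log ζ / α) := by ring
    rw [h2] at h1
    simp only [hε_def]
    linarith
  refine ⟨α * ε * C, mul_pos (mul_pos hα0 hε) hCpos, fun n hn => ?_⟩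
  set x : ℝ := (n:ℝ)^(1/α) with hx_def
  have hn0 : (0:ℝ) < n := by exact_mod_cast hn
  have hx1 : 1 ≤ x := Real.one_le_rpow (by exact_mod_cast hn) (by positivity)
  have hx0 : 0 < x := lt_of_lt_of_le one_pos hx1
  set M : ℕ := ⌈C * x⌉₊ with hM_def
  have hCxM : C * x ≤ M := Nat.le_ceil _
  have hM1 : 1 ≤ M := Nat.one_le_iff_ne_zero.2 (by
    simp only [hM_def, Ne, Nat.ceil_eq_zero, not_le]
    positivity)
  have hM0 : (0:ℝ) < M := by exact_mod_cast hM1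
  have hF0 : (0:ℝ) < (M.factorial : ℝ) := by exact_mod_cast Nat.factorial_pos M
  have e1 : (n:ℝ) ^ M = Real.exp ((M:ℝ) * Real.log n) := by
    rw [Real.exp_nat_mul, Real.exp_log hn0]
  have e2 : (M.factorial : ℝ) ^ (-α) = Real.exp (-(α * Real.log (M.factorial : ℝ))) := by
    rw [Real.rpow_def_of_pos hF0]
    congr 1; ring
  have e3 : ζ ^ M = Real.exp ((M:ℝ) * Real.log ζ) := by
    rw [Real.exp_nat_mul, Real.exp_log hζ0]
  rw [e1, e2, e3, ← Real.exp_sub, ← Real.exp_add]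
  apply Real.exp_le_exp.2
  have h1 : (M:ℝ) * Real.log M - M ≤ Real.log (M.factorial : ℝ) := by
    have hp : ((M:ℝ)) ^ M / (M.factorial : ℝ) ≤ Real.exp M :=
      Real.pow_div_factorial_le_exp _ hM0.le M
    have hp' : (M:ℝ) ^ M ≤ Real.exp M * M.factorial := by
      rw [div_le_iff₀ hF0] at hp; linarith
    have hl := Real.log_le_log (by positivity) hp'
    rw [Real.log_pow, Real.log_mul (Real.exp_ne_zero _) (ne_of_gt hF0), Real.log_exp] at hl
    linarith
  have h2 : Real.log C + 1/α * Real.log n ≤ Real.log M := by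
    have hl : Real.log (C * x) ≤ Real.log M := Real.log_le_log (by positivity) hCxM
    rw [Real.log_mul (ne_of_gt hCpos) (ne_of_gt hx0), hx_def, Real.log_rpow hn0] at hl
    linarith
  have f1 : α * ((M:ℝ) * Real.log M - M) ≤ α * Real.log (M.factorial : ℝ) :=
    mul_le_mul_of_nonneg_left h1 hα0.le
  have f2 : (α * (M:ℝ)) * (Real.log C + 1/α * Real.log n) ≤ (α * (M:ℝ)) * Real.log M :=
    mul_le_mul_of_nonneg_left h2 (by positivity)
  have f3 : (α * (M:ℝ)) * (1/α * Real.log n) = (M:ℝ) * Real.log n := by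
    field_simp
  have f4 : α * ε = α * Real.log C + Real.log ζ - α := by
    simp only [hε_def]
    field_simp
  have key : (M:ℝ) * Real.log n + (-(α * Real.log (M.factorial : ℝ)) - (M:ℝ) * Real.log ζ) ≤
      -(α * ε) * M := by nlinarith [f1, f2, f3, f4]
  refine key.trans ?_
  have hfin : (α * ε) * (C * x) ≤ (α * ε) * M :=
    mul_le_mul_of_nonneg_left hCxM (mul_pos hα0 hε).le
  nlinarith [hfin]

lemma santa_zeta_summable {α : ℝ} (hα : 1 < α) :
    Summable (fun j : ℕ => ((j : ℝ) + 1) ^ (-α)) := by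
  have h : Summable (fun j : ℕ => ((j : ℝ)) ^ (-α)) :=
    Real.summable_nat_rpow.2 (by linarith)
  have h2 := (summable_nat_add_iff 1).2 h
  refine h2.congr fun j => ?_
  push_cast
  ring_nf

lemma santa_zeta_one_le {α : ℝ} (hα : 1 < α) :
    1 ≤ ∑' j : ℕ, ((j : ℝ) + 1) ^ (-α) := by
  have h := Summable.le_tsum (santa_zeta_summable hα) 0
    (fun i _ => Real.rpow_nonneg (by positivity) _)
  simpa using h

lemma santa_exp_summable {α δ : ℝ} (hα : 1 < α) (hδ : 0 < δ) :
    Summable (fun n : ℕ => Real.exp (-δ * (n : ℝ) ^ (1/α))) := by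
  have hα0 : (0:ℝ) < α := by linarith
  set k : ℕ := ⌈2 * α⌉₊ with hk_def
  have hk : 2 * α ≤ k := Nat.le_ceil _
  set c : ℝ := (k.factorial : ℝ) / δ ^ k with hc_def
  have hb : ∀ m : ℕ, 1 ≤ m →
      Real.exp (-δ * (m : ℝ) ^ (1/α)) ≤ c * (m : ℝ) ^ (-(2:ℝ)) := by
    intro m hm
    have hm1 : (1:ℝ) ≤ m := by exact_mod_cast hm
    have hm0 : (0:ℝ) < m := by linarith
    set z : ℝ := (m : ℝ) ^ (1/α) with hz_def
    have hz0 : 0 < z := Real.rpow_pos_of_pos hm0 _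
    set y : ℝ := δ * z with hy_def
    have hy0 : 0 < y := mul_pos hδ hz0
    have hyk : y ^ k ≤ Real.exp y * k.factorial := by
      have hp := Real.pow_div_factorial_le_exp y hy0.le k
      have hf : (0:ℝ) < (k.factorial : ℝ) := by exact_mod_cast Nat.factorial_pos k
      rw [div_le_iff₀ hf] at hp; linarith
    have step1 : Real.exp (-y) ≤ (k.factorial : ℝ) / y ^ k := by
      rw [le_div_iff₀ (pow_pos hy0 k)]
      have hee : Real.exp (-y) * Real.exp y = 1 := by
        rw [← Real.exp_add]; simp
      nlinarith [Real.exp_pos y, hyk, Real.exp_pos (-y)]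
    have hxk : z ^ k = (m : ℝ) ^ ((k : ℝ)/α) := by
      rw [hz_def, ← Real.rpow_natCast ((m:ℝ) ^ (1/α)) k, ← Real.rpow_mul hm0.le]
      congr 1; ring
    have h2k : (m:ℝ) ^ (2:ℝ) ≤ (m:ℝ) ^ ((k:ℝ)/α) :=
      Real.rpow_le_rpow_of_exponent_le hm1 (by rw [le_div_iff₀ hα0]; linarith)
    have hyk2 : δ ^ k * (m:ℝ) ^ (2:ℝ) ≤ y ^ k := by
      rw [hy_def, mul_pow, hxk]
      exact mul_le_mul_of_nonneg_left h2k (pow_pos hδ k).le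
    have step2 : (k.factorial : ℝ) / y ^ k ≤ c * (m : ℝ) ^ (-(2:ℝ)) := by
      have hm2 : (0:ℝ) < (m:ℝ) ^ (2:ℝ) := Real.rpow_pos_of_pos hm0 _
      have hc1 : c * (m : ℝ) ^ (-(2:ℝ)) = (k.factorial : ℝ) / (δ ^ k * (m:ℝ) ^ (2:ℝ)) := by
        rw [hc_def, Real.rpow_neg hm0.le]
        have hmne : ((m:ℝ) ^ (2:ℝ)) ≠ 0 := ne_of_gt (Real.rpow_pos_of_pos hm0 _)
        field_simp
      rw [hc1]
      apply div_le_div_of_nonneg_left (by positivity) (by positivity) hyk2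
    calc Real.exp (-δ * (m : ℝ) ^ (1/α)) = Real.exp (-y) := by rw [hy_def, hz_def]; ring_nf
      _ ≤ (k.factorial : ℝ) / y ^ k := step1
      _ ≤ c * (m : ℝ) ^ (-(2:ℝ)) := step2
  have hS2 : Summable (fun n : ℕ => c * ((n:ℝ)) ^ (-(2:ℝ))) :=
    (Real.summable_nat_rpow.2 (by norm_num)).mul_left c
  have hS3 : Summable (fun n : ℕ => c * (((n+1 : ℕ)):ℝ) ^ (-(2:ℝ))) :=
    (summable_nat_add_iff 1).2 hS2
  refine (summable_nat_add_iff 1).1 ?_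
  refine Summable.of_nonneg_of_le (fun n => (Real.exp_pos _).le)
    (fun n => ?_) hS3
  exact hb (n+1) (Nat.succ_le_succ (Nat.zero_le _))

theorem santa_fe_upper {Ω : Type*} [MeasurableSpace Ω]
    (μ : Measure Ω) [IsProbabilityMeasure μ]
    (K : ℕ → Ω → ℕ) (hK : ∀ i, Measurable (K i))
    (α : ℝ) (hα : 1 < α)
    (hiid : iIndepFun K μ)
    (hdist : ∀ i k : ℕ, 1 ≤ k →
      μ {ω | K i ω = k} =
        ENNReal.ofReal ((k : ℝ) ^ (-α) / ∑' j : ℕ, ((j : ℝ) + 1) ^ (-α)))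
    (C : ℝ)
    (hC : C > Real.exp 1 * (∑' j : ℕ, ((j : ℝ) + 1) ^ (-α)) ^ (-(1 / α))) :
    (∃ δ > (0 : ℝ), ∀ᶠ n : ℕ in atTop,
      μ {ω | ⌈C * (n : ℝ) ^ (1 / α)⌉₊ ≤ santaU K n ω} ≤
        ENNReal.ofReal ((C * (n : ℝ) ^ (1 / α) + 2) *
          Real.exp (-δ * (n : ℝ) ^ (1 / α)))) ∧
    (∑' n : ℕ, μ {ω | ⌈C * (n : ℝ) ^ (1 / α)⌉₊ ≤ santaU K n ω}) < ⊤ ∧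
    (∀ᵐ ω ∂μ, ∀ᶠ n : ℕ in atTop,
      santaU K n ω < ⌈C * (n : ℝ) ^ (1 / α)⌉₊) := by
  set ζ : ℝ := ∑' j : ℕ, ((j : ℝ) + 1) ^ (-α) with hζ_def
  have hζ1 : 1 ≤ ζ := santa_zeta_one_le hα
  have hζ0 : 0 < ζ := lt_of_lt_of_le one_pos hζ1
  have hCpos : 0 < C :=
    lt_trans (mul_pos (Real.exp_pos 1) (Real.rpow_pos_of_pos hζ0 _)) hC
  obtain ⟨δ, hδ, hnum⟩ := santa_numeric α ζ C hα hζ1 hC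
  set s : ℕ → Set Ω := fun n => {ω | ⌈C * (n : ℝ) ^ (1 / α)⌉₊ ≤ santaU K n ω} with hs_def
  set p : ℕ → ℝ≥0∞ := fun k => ENNReal.ofReal ((k : ℝ) ^ (-α) / ζ) with hp_def
  have hp : ∀ i k, 1 ≤ k → μ (K i ⁻¹' {k}) = p k := fun i k hk => hdist i k hk
  -- main bound for n ≥ 1
  have hmain : ∀ n : ℕ, 1 ≤ n →
      μ (s n) ≤ ENNReal.ofReal (Real.exp (-δ * (n : ℝ) ^ (1/α))) := by
    intro n hn
    set M : ℕ := ⌈C * (n : ℝ) ^ (1 / α)⌉₊ with hM_def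
    have hsub : s n ⊆ {ω | ∀ m : ℕ, 1 ≤ m → m ≤ M → ∃ i < n, K i ω = m} :=
      fun ω hω m h1 hm => santa_mem hω h1 hm
    refine (measure_mono hsub).trans ((santa_union_bound hiid p hp n M).trans ?_)
    have hprodR : (∏ m ∈ Finset.range M, ((m : ℝ) + 1) ^ (-α) / ζ) =
        (M.factorial : ℝ) ^ (-α) / ζ ^ M := by
      rw [Finset.prod_div_distrib, Finset.prod_const, Finset.card_range]
      congr 1
      rw [Real.finset_prod_rpow _ _ (fun i _ => by positivity) _]
      congr 1
      have := Finset.prod_range_add_one_eq_factorial M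
      exact_mod_cast this
    have hprodE : (∏ m ∈ Finset.range M, p (m + 1)) =
        ENNReal.ofReal ((M.factorial : ℝ) ^ (-α) / ζ ^ M) := by
      have h1 : ∀ m ∈ Finset.range M, p (m + 1) =
          ENNReal.ofReal (((m : ℝ) + 1) ^ (-α) / ζ) := by
        intro m _
        simp only [hp_def]
        push_cast
        ring_nf
      rw [Finset.prod_congr rfl h1,
        ← ENNReal.ofReal_prod_of_nonneg (fun i _ => by positivity), hprodR]
    rw [hprodE]
    have hnn : ((n : ℝ≥0∞)) ^ M = ENNReal.ofReal ((n : ℝ) ^ M) := by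
      rw [ENNReal.ofReal_pow (by positivity)]
      congr 1
      simp [ENNReal.ofReal_natCast]
    rw [hnn, ← ENNReal.ofReal_mul (by positivity)]
    exact ENNReal.ofReal_le_ofReal (hnum n hn)
  -- bound for all n (including 0)
  have hall : ∀ n : ℕ, μ (s n) ≤ ENNReal.ofReal (Real.exp (-δ * (n : ℝ) ^ (1/α))) := by
    intro n
    rcases Nat.eq_zero_or_pos n with rfl | hn
    · have : (-δ * ((0:ℕ) : ℝ) ^ (1/α)) = 0 := by
        rw [Nat.cast_zero, Real.zero_rpow (by positivity : (1/α) ≠ 0)]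
        ring
      rw [this, Real.exp_zero, ENNReal.ofReal_one]
      exact prob_le_one
    · exact hmain n hn
  have hsummable : Summable (fun n : ℕ => Real.exp (-δ * (n : ℝ) ^ (1/α))) :=
    santa_exp_summable hα hδ
  have htsum : (∑' n : ℕ, μ (s n)) < ⊤ := by
    calc (∑' n : ℕ, μ (s n)) ≤
        ∑' n : ℕ, ENNReal.ofReal (Real.exp (-δ * (n : ℝ) ^ (1/α))) :=
          ENNReal.tsum_le_tsum hall
      _ = ENNReal.ofReal (∑' n : ℕ, Real.exp (-δ * (n : ℝ) ^ (1/α))) :=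
          (ENNReal.ofReal_tsum_of_nonneg (fun n => (Real.exp_pos _).le) hsummable).symm
      _ < ⊤ := ENNReal.ofReal_lt_top
  refine ⟨⟨δ, hδ, ?_⟩, htsum, ?_⟩
  · filter_upwards [eventually_ge_atTop 1] with n hn
    refine (hmain n hn).trans (ENNReal.ofReal_le_ofReal ?_)
    have hx : (0:ℝ) ≤ (n : ℝ) ^ (1/α) := Real.rpow_nonneg (by positivity) _
    have h1 : (1:ℝ) ≤ C * (n : ℝ) ^ (1/α) + 2 := by nlinarith
    nlinarith [Real.exp_pos (-δ * (n : ℝ) ^ (1/α))]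
  · have := MeasureTheory.ae_eventually_notMem (μ := μ) (s := s) htsum.ne
    filter_upwards [this] with ω hω
    filter_upwards [hω] with n hn
    simp only [hs_def, Set.mem_setOf_eq] at hn
    exact not_le.1 hn
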